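/- Inverse-probability-weighting identity: Let X and Π be independent random variables with Π taking values in a finite set Pol, and Y an integrable random variable. Let Π' : 𝒳 → Set(Pol) be any function assigning a (possibly empty) set of policies to each covariate value, and let 𝒳' ⊆ 𝒳 be such that P(Π ∈ Π'(x)) > 0 for every x ∈ 𝒳'. Then E[ Y · 1{Π ∈ Π'(X)} / P(Π ∈ Π'(X)) · 1{X ∈ 𝒳'} ] = E[ E[Y | Π ∈ Π'(X), X] · 1{X ∈ 𝒳'} ], where the inner conditional expectation at X = x is E[Y | X = x, Π ∈ Π'(x)]. -/

import Mathlib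

open MeasureTheory

/-- Conditional mean of `Y` given the event `D`: `E[Y · 1_D] / P(D)`. -/
noncomputable def condMean {Ω : Type*} [MeasurableSpace Ω] (μ : Measure Ω)
    (Y : Ω → ℝ) (D : Set Ω) : ℝ :=
  (∫ ω in D, Y ω ∂μ) / (μ D).toReal

/-- Inverse-probability-weighting identity:
`E[Y · 1{Π ∈ Pi'(X)} / P(Π ∈ Pi'(X)) · 1{X ∈ 𝒳'}] = E[E[Y ∣ Π ∈ Pi'(X), X] · 1{X ∈ 𝒳'}]`. -/
theorem stmt11 {Ω 𝒳 Pol : Type*} [Fintype 𝒳] [DecidableEq 𝒳]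
    [Fintype Pol] [DecidableEq Pol]
    [MeasurableSpace Ω] (μ : Measure Ω) [IsProbabilityMeasure μ]
    (X : Ω → 𝒳) (P : Ω → Pol) (Y : Ω → ℝ)
    (hXmeas : ∀ x, MeasurableSet {ω | X ω = x})
    (hPmeas : ∀ p, MeasurableSet {ω | P ω = p})
    (hYint : Integrable Y μ)
    (hindep : ∀ (x : 𝒳) (p : Pol),
      μ ({ω | X ω = x} ∩ {ω | P ω = p}) = μ {ω | X ω = x} * μ {ω | P ω = p})
    (Pi' : 𝒳 → Finset Pol) (𝒳' : Finset 𝒳)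
    (hpos : ∀ x ∈ 𝒳', 0 < μ {ω | P ω ∈ Pi' x}) :
    (∫ ω, Y ω * ((if P ω ∈ Pi' (X ω) then (1 : ℝ) else 0)
          / (μ {ω' | P ω' ∈ Pi' (X ω)}).toReal)
        * (if X ω ∈ 𝒳' then (1 : ℝ) else 0) ∂μ)
      = ∫ ω, condMean μ Y ({ω' | X ω' = X ω} ∩ {ω' | P ω' ∈ Pi' (X ω)})
          * (if X ω ∈ 𝒳' then (1 : ℝ) else 0) ∂μ := by
  classical
  set c : 𝒳 → ℝ := fun x => (μ {ω' | P ω' ∈ Pi' x}).toReal with hc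
  have hBmeas : ∀ x, MeasurableSet {ω | P ω ∈ Pi' x} := by
    intro x
    have h : {ω | P ω ∈ Pi' x} = ⋃ p ∈ Pi' x, {ω | P ω = p} := by
      ext ω; simp
    rw [h]
    exact (Pi' x).measurableSet_biUnion (fun p _ => hPmeas p)
  set S : 𝒳 → Set Ω := fun x => {ω | X ω = x} ∩ {ω | P ω ∈ Pi' x} with hS
  have hSmeas : ∀ x, MeasurableSet (S x) := fun x => (hXmeas x).inter (hBmeas x)
  have hBsum : ∀ x, μ {ω | P ω ∈ Pi' x} = ∑ p ∈ Pi' x, μ {ω | P ω = p} := by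
    intro x
    have h : {ω | P ω ∈ Pi' x} = ⋃ p ∈ Pi' x, {ω | P ω = p} := by
      ext ω; simp
    rw [h]
    refine measure_biUnion_finset ?_ (fun p _ => hPmeas p)
    intro p _ q _ hpq
    simp only [Function.onFun, Set.disjoint_left]
    rintro ω h1 h2
    exact hpq (h1.symm.trans h2)
  have hindepB : ∀ x, μ (S x) = μ {ω | X ω = x} * μ {ω | P ω ∈ Pi' x} := by
    intro x
    have h : S x = ⋃ p ∈ Pi' x, ({ω | X ω = x} ∩ {ω | P ω = p}) := by
      ext ω
      simp only [hS, Set.mem_inter_iff, Set.mem_setOf_eq, Set.mem_iUnion, Finset.mem_coe,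
        exists_prop]
      constructor
      · rintro ⟨h1, h2⟩; exact ⟨P ω, h2, h1, rfl⟩
      · rintro ⟨p, hp1, h1, h2⟩; exact ⟨h1, by rw [h2]; exact hp1⟩
    rw [h, measure_biUnion_finset ?_ (fun p _ => (hXmeas x).inter (hPmeas p))]
    · simp_rw [hindep x]
      rw [← Finset.mul_sum, hBsum x]
    · intro p _ q _ hpq
      simp only [Function.onFun, Set.disjoint_left]
      rintro ω ⟨_, h1⟩ ⟨_, h2⟩
      exact hpq (h1.symm.trans h2)
  -- LHS pointwise decomposition
  have hL : ∀ ω, Y ω * ((if P ω ∈ Pi' (X ω) then (1 : ℝ) else 0) / c (X ω))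
      * (if X ω ∈ 𝒳' then (1 : ℝ) else 0)
      = ∑ x ∈ 𝒳', Set.indicator (S x) (fun ω => Y ω / c x) ω := by
    intro ω
    by_cases hx : X ω ∈ 𝒳'
    · rw [Finset.sum_eq_single (X ω)]
      · by_cases hp : P ω ∈ Pi' (X ω)
        · have : ω ∈ S (X ω) := ⟨rfl, hp⟩
          rw [Set.indicator_of_mem this]
          simp only [hp, hx, if_true, mul_one]
          rw [mul_one_div]
        · have : ω ∉ S (X ω) := fun h => hp h.2
          rw [Set.indicator_of_notMem this]
          simp [hp]
      · intro x _ hxne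
        refine Set.indicator_of_notMem ?_ _
        rintro ⟨h1, -⟩
        simp only [Set.mem_setOf_eq] at h1
        exact hxne h1.symm
      · intro h; exact absurd hx h
    · rw [if_neg hx, mul_zero]
      refine (Finset.sum_eq_zero ?_).symm
      intro x hxmem
      refine Set.indicator_of_notMem ?_ _
      rintro ⟨h1, _⟩
      have h1' : X ω = x := h1
      rw [← h1'] at hxmem
      exact hx hxmem
  -- RHS pointwise decomposition
  have hR : ∀ ω, condMean μ Y ({ω' | X ω' = X ω} ∩ {ω' | P ω' ∈ Pi' (X ω)})
      * (if X ω ∈ 𝒳' then (1 : ℝ) else 0)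
      = ∑ x ∈ 𝒳', Set.indicator {ω' | X ω' = x} (fun _ => condMean μ Y (S x)) ω := by
    intro ω
    by_cases hx : X ω ∈ 𝒳'
    · rw [Finset.sum_eq_single (X ω)]
      · rw [Set.indicator_of_mem (by exact rfl : ω ∈ {ω' | X ω' = X ω})]
        simp [hx, hS]
      · intro x _ hxne
        refine Set.indicator_of_notMem ?_ _
        intro h
        have h' : X ω = x := h
        exact hxne h'.symm
      · intro h; exact absurd hx h
    · rw [if_neg hx, mul_zero]
      refine (Finset.sum_eq_zero ?_).symm
      intro x hxmem
      refine Set.indicator_of_notMem ?_ _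
      intro h
      have h' : X ω = x := h
      rw [← h'] at hxmem
      exact hx hxmem
  have hLint : ∀ x ∈ 𝒳', Integrable (Set.indicator (S x) (fun ω => Y ω / c x)) μ :=
    fun x _ => (hYint.div_const (c x)).indicator (hSmeas x)
  have hRint : ∀ x ∈ 𝒳',
      Integrable (Set.indicator {ω' | X ω' = x} (fun _ => condMean μ Y (S x))) μ :=
    fun x _ => (integrable_const _).indicator (hXmeas x)
  calc (∫ ω, Y ω * ((if P ω ∈ Pi' (X ω) then (1 : ℝ) else 0) / c (X ω))
        * (if X ω ∈ 𝒳' then (1 : ℝ) else 0) ∂μ)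
      = ∫ ω, ∑ x ∈ 𝒳', Set.indicator (S x) (fun ω => Y ω / c x) ω ∂μ := by
        exact integral_congr_ae (Filter.Eventually.of_forall hL)
    _ = ∑ x ∈ 𝒳', ∫ ω, Set.indicator (S x) (fun ω => Y ω / c x) ω ∂μ :=
        integral_finset_sum _ hLint
    _ = ∑ x ∈ 𝒳', condMean μ Y (S x) * (μ {ω | X ω = x}).toReal := by
        refine Finset.sum_congr rfl (fun x hx => ?_)
        rw [integral_indicator (hSmeas x)]
        rw [integral_div]
        have hbpos := hpos x hx
        have hbne : (μ {ω | P ω ∈ Pi' x}).toReal ≠ 0 :=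
          ENNReal.toReal_ne_zero.2 ⟨hbpos.ne', measure_ne_top μ _⟩
        by_cases ha : μ {ω | X ω = x} = 0
        · have hSnull : μ (S x) = 0 := by
            rw [hindepB x, ha, zero_mul]
          have hI : (∫ a in S x, Y a ∂μ) = 0 := by
            rw [Measure.restrict_eq_zero.mpr hSnull]
            exact integral_zero_measure _
          simp [condMean, hI, ha]
        · have hane : (μ {ω | X ω = x}).toReal ≠ 0 :=
            ENNReal.toReal_ne_zero.2 ⟨ha, measure_ne_top μ _⟩
          rw [condMean, hindepB x, ENNReal.toReal_mul]
          field_simp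
          simp only [hc]
          rw [mul_div_assoc, div_self hbne, mul_one]
    _ = ∑ x ∈ 𝒳', ∫ ω, Set.indicator {ω' | X ω' = x} (fun _ => condMean μ Y (S x)) ω ∂μ := by
        refine Finset.sum_congr rfl (fun x hx => ?_)
        rw [integral_indicator_const _ (hXmeas x)]
        simp [mul_comm, measureReal_def]
    _ = ∫ ω, ∑ x ∈ 𝒳', Set.indicator {ω' | X ω' = x} (fun _ => condMean μ Y (S x)) ω ∂μ :=
        (integral_finset_sum _ hRint).symm
    _ = _ := integral_congr_ae (Filter.Eventually.of_forall (fun ω => (hR ω).symm))
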